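/- Let p > 1, τ > 1, q > 0, and define g(t) = (1/(τ-1))(1 - (1+t)^{1-τ}) and G(t) = (q/γ)((1+t)^{γ/q} - 1) for t ≥ 0, where γ = τ(p-1) and q = pγ/(p - γ/(p-1)) (so that |G'(t)|^p = g'(t)). Then for all a, b ≥ 0: |a - b|^{p-2}(a-b)(g(a) - g(b)) ≥ |G(a) - G(b)|^p. -/

import Mathlib

open MeasureTheory Set

lemma integral_one_add_rpow (c b a : ℝ) (hb : 0 ≤ b) (ha : 0 ≤ a) (hc : c ≠ -1) :
    ∫ t in b..a, (1 + t) ^ c = ((1 + a) ^ (c + 1) - (1 + b) ^ (c + 1)) / (c + 1) := by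
  have h : ∫ t in b..a, (1 + t) ^ c = ∫ x in (1 + b)..(1 + a), x ^ c :=
    intervalIntegral.integral_comp_add_left (fun x => x ^ c) 1
  rw [h, integral_rpow (Or.inr ⟨hc, Set.notMem_uIcc_of_lt (by linarith) (by linarith)⟩)]

lemma cont_one_add_rpow (c b a : ℝ) (hb : 0 ≤ b) :
    ContinuousOn (fun t : ℝ => (1 + t) ^ c) (Icc b a) := by
  apply ContinuousOn.rpow_const (by fun_prop)
  intro x hx
  exact Or.inl (by nlinarith [hx.1])

lemma key (p τ s b a : ℝ) (hp : 1 < p) (hs0 : 0 < s) (hs1 : s < 1) (hτ1 : 1 < τ)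
    (hτ : τ = p * (1 - s)) (hb : 0 ≤ b) (hab : b < a) :
    (((1 + a) ^ s - (1 + b) ^ s) / s) ^ p
      ≤ (a - b) ^ (p - 1) * (((1 + a) ^ (1 - τ) - (1 + b) ^ (1 - τ)) / (1 - τ)) := by
  have ha : 0 ≤ a := hb.trans hab.le
  set μ : Measure ℝ := volume.restrict (Icc b a) with hμ
  haveI : IsFiniteMeasure μ := by
    constructor
    rw [hμ, Measure.restrict_apply_univ, Real.volume_Icc]
    exact ENNReal.ofReal_lt_top
  haveI : NeZero μ := by
    constructor
    intro h
    have := congrArg (fun m : Measure ℝ => m Set.univ) h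
    simp [hμ, Measure.restrict_apply_univ, Real.volume_Icc] at this
    linarith
  have hμuniv : (μ Set.univ).toReal = a - b := by
    rw [hμ, Measure.restrict_apply_univ, Real.volume_Icc, ENNReal.toReal_ofReal (by linarith)]
  -- Jensen
  have hconv : ConvexOn ℝ (Ici 0) fun x : ℝ => x ^ p := convexOn_rpow hp.le
  have hcont : ContinuousOn (fun x : ℝ => x ^ p) (Ici 0) := by
    apply ContinuousOn.rpow_const (by fun_prop)
    intro x hx; exact Or.inr (by linarith)
  have hf : IntegrableOn (fun t : ℝ => (1 + t) ^ (s - 1)) (Icc b a) :=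
    (cont_one_add_rpow (s - 1) b a hb).integrableOn_Icc
  have hgf : IntegrableOn (fun t : ℝ => ((1 + t) ^ (s - 1)) ^ p) (Icc b a) := by
    have h2 : IntegrableOn (fun t : ℝ => (1 + t) ^ ((s - 1) * p)) (Icc b a) :=
      (cont_one_add_rpow ((s - 1) * p) b a hb).integrableOn_Icc
    apply h2.congr_fun ?_ measurableSet_Icc
    intro x hx
    simp only []
    rw [← Real.rpow_mul (by nlinarith [hx.1] : (0:ℝ) ≤ 1 + x)]
  have hfs : ∀ᵐ x ∂μ, (1 + x) ^ (s - 1) ∈ Ici (0:ℝ) := by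
    filter_upwards [self_mem_ae_restrict (measurableSet_Icc : MeasurableSet (Icc b a))] with x hx
    exact Real.rpow_nonneg (by nlinarith [hx.1]) _
  have jensen := hconv.map_average_le hcont isClosed_Ici hfs hf hgf
  have hab' : (0:ℝ) < a - b := by linarith
  have hint1 : ∫ x, (1 + x) ^ (s - 1) ∂μ = ((1 + a) ^ s - (1 + b) ^ s) / s := by
    rw [hμ, integral_Icc_eq_integral_Ioc, ← intervalIntegral.integral_of_le hab.le,
      integral_one_add_rpow _ _ _ hb ha (by intro h; apply hs0.ne'; linarith)]
    have h1 : s - 1 + 1 = s := by ring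
    rw [h1]
  have hint2 : ∫ x, ((1 + x) ^ (s - 1)) ^ p ∂μ
      = ((1 + a) ^ (1 - τ) - (1 + b) ^ (1 - τ)) / (1 - τ) := by
    rw [hμ, setIntegral_congr_fun measurableSet_Icc
      (fun x hx => by
        show ((1 + x) ^ (s - 1)) ^ p = (1 + x) ^ ((s - 1) * p)
        rw [← Real.rpow_mul (by nlinarith [hx.1] : (0:ℝ) ≤ 1 + x)])]
    rw [integral_Icc_eq_integral_Ioc, ← intervalIntegral.integral_of_le hab.le,
      integral_one_add_rpow _ _ _ hb ha (by intro h; apply (by linarith : τ ≠ 1); nlinarith)]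
    have h1 : (s - 1) * p + 1 = 1 - τ := by rw [hτ]; ring
    rw [h1]
  rw [average_eq, average_eq, measureReal_def, hμuniv, hint1, hint2, smul_eq_mul, smul_eq_mul] at jensen
  set S := ((1 + a) ^ s - (1 + b) ^ s) / s with hSdef
  set T := ((1 + a) ^ (1 - τ) - (1 + b) ^ (1 - τ)) / (1 - τ) with hTdef
  have hS : 0 ≤ S := by
    have := Real.rpow_le_rpow (by linarith : (0:ℝ) ≤ 1 + b) (by linarith : 1 + b ≤ 1 + a) hs0.le
    have : (0:ℝ) ≤ (1 + a) ^ s - (1 + b) ^ s := by linarith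
    positivity
  calc S ^ p = ((a - b) * ((a - b)⁻¹ * S)) ^ p := by
        rw [← mul_assoc, mul_inv_cancel₀ hab'.ne', one_mul]
    _ = (a - b) ^ p * ((a - b)⁻¹ * S) ^ p := Real.mul_rpow hab'.le (by positivity)
    _ ≤ (a - b) ^ p * ((a - b)⁻¹ * T) := by
        apply mul_le_mul_of_nonneg_left jensen (Real.rpow_nonneg hab'.le p)
    _ = (a - b) ^ (p - 1) * T := by
        rw [← mul_assoc]
        congr 1
        rw [Real.rpow_sub hab', Real.rpow_one, ← div_eq_mul_inv]

lemma aux (p τ s b a : ℝ) (hp : 1 < p) (hs0 : 0 < s) (hs1 : s < 1) (hτ1 : 1 < τ)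
    (hτ : τ = p * (1 - s)) (hb : 0 ≤ b) (hab : b ≤ a) :
    |(1 / s) * ((1 + a) ^ s - 1) - (1 / s) * ((1 + b) ^ s - 1)| ^ p
      ≤ |a - b| ^ (p - 2) * (a - b) *
        ((1 / (τ - 1)) * (1 - (1 + a) ^ (1 - τ)) - (1 / (τ - 1)) * (1 - (1 + b) ^ (1 - τ))) := by
  rcases eq_or_lt_of_le hab with rfl | hlt
  · simp [Real.zero_rpow (by positivity : p ≠ 0)]
  · have key' := key p τ s b a hp hs0 hs1 hτ1 hτ hb hlt
    have hab' : (0:ℝ) < a - b := by linarith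
    have hS : (0:ℝ) ≤ (1 + a) ^ s - (1 + b) ^ s := by
      have := Real.rpow_le_rpow (by linarith : (0:ℝ) ≤ 1 + b)
        (by linarith : 1 + b ≤ 1 + a) hs0.le
      linarith
    have e1 : |(1 / s) * ((1 + a) ^ s - 1) - (1 / s) * ((1 + b) ^ s - 1)|
        = ((1 + a) ^ s - (1 + b) ^ s) / s := by
      rw [abs_of_nonneg (by rw [div_eq_mul_inv] at *; nlinarith [inv_pos.mpr hs0])]
      field_simp
      ring
    have e2 : |a - b| ^ (p - 2) * (a - b) = (a - b) ^ (p - 1) := by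
      rw [abs_of_pos hab']
      rw [show p - 1 = p - 2 + 1 by ring, Real.rpow_add_one hab'.ne']
    have e3 : (1 / (τ - 1)) * (1 - (1 + a) ^ (1 - τ)) - (1 / (τ - 1)) * (1 - (1 + b) ^ (1 - τ))
        = ((1 + a) ^ (1 - τ) - (1 + b) ^ (1 - τ)) / (1 - τ) := by
      have hτne : τ - 1 ≠ 0 := by intro h; linarith
      have h1τ : (1:ℝ) - τ ≠ 0 := by intro h; linarith
      field_simp
      ring
    rw [e1, e2, e3]
    exact key'

/-- Lemma A.5 (first inequality): with `γ = τ(p-1)`, `q = pγ/(p - γ/(p-1))`,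
`g(t) = (1/(τ-1))(1 - (1+t)^(1-τ))` and `G(t) = (q/γ)((1+t)^(γ/q) - 1)`, one has
`|a-b|^(p-2)(a-b)(g(a)-g(b)) ≥ |G(a)-G(b)|^p` for all `a, b ≥ 0`. -/
theorem stmt_7 (p τ γ q a b : ℝ) (hp : 1 < p) (hτ : 1 < τ) (hq0 : 0 < q)
    (hγ : γ = τ * (p - 1)) (hq : q = p * γ / (p - γ / (p - 1)))
    (ha : 0 ≤ a) (hb : 0 ≤ b) :
    |a - b| ^ (p - 2) * (a - b) *
        ((1 / (τ - 1)) * (1 - (1 + a) ^ (1 - τ)) - (1 / (τ - 1)) * (1 - (1 + b) ^ (1 - τ)))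
      ≥ |(q / γ) * ((1 + a) ^ (γ / q) - 1) - (q / γ) * ((1 + b) ^ (γ / q) - 1)| ^ p := by
  have hp1 : (0:ℝ) < p - 1 := by linarith
  have hγ0 : 0 < γ := by rw [hγ]; nlinarith
  have hγτ : γ / (p - 1) = τ := by rw [hγ]; field_simp
  have hpτ : τ < p := by
    by_contra h
    push_neg at h
    have h2 : p * γ / (p - τ) ≤ 0 :=
      div_nonpos_of_nonneg_of_nonpos (by positivity) (by linarith)
    rw [hq, hγτ] at hq0
    linarith
  set s := γ / q with hs
  have hsval : s = (p - τ) / p := by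
    rw [hs, hq, hγτ]
    field_simp
  have hs0 : 0 < s := by rw [hsval]; exact div_pos (by linarith) (by linarith)
  have hs1 : s < 1 := by
    rw [hsval, div_lt_one (by linarith)]
    linarith
  have hτs : τ = p * (1 - s) := by
    rw [hsval]
    field_simp
    ring
  have hqγ : q / γ = 1 / s := by
    rw [hs, one_div_div]
  rw [ge_iff_le, hqγ]
  rcases le_total b a with hab | hab
  · exact aux p τ s b a hp hs0 hs1 hτ hτs hb hab
  · calc |(1 / s) * ((1 + a) ^ s - 1) - (1 / s) * ((1 + b) ^ s - 1)| ^ p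
        = |(1 / s) * ((1 + b) ^ s - 1) - (1 / s) * ((1 + a) ^ s - 1)| ^ p := by
          rw [abs_sub_comm]
      _ ≤ |b - a| ^ (p - 2) * (b - a) *
            ((1 / (τ - 1)) * (1 - (1 + b) ^ (1 - τ)) - (1 / (τ - 1)) * (1 - (1 + a) ^ (1 - τ))) :=
          aux p τ s a b hp hs0 hs1 hτ hτs ha hab
      _ = |a - b| ^ (p - 2) * (a - b) *
            ((1 / (τ - 1)) * (1 - (1 + a) ^ (1 - τ)) - (1 / (τ - 1)) * (1 - (1 + b) ^ (1 - τ))) := by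
          rw [abs_sub_comm]
          ring
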